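/- Let q be a prime power, n coprime to q, and P a μ_q-invariant subset of Z/nZ. The cyclic code C_P satisfies φ_{s,t}(C_P) = C_P^⊥ for some isometry φ_{s,t} if and only if there exist s ∈ (Z/nZ)^* and t with qt ≡ t (mod n) such that Z/nZ is the disjoint union of P and ρ_{−s,t}(P) = {−s(i+t) : i ∈ P}. -/

import Mathlib

set_option linter.unusedSectionVars false
set_option linter.unusedVariables false
set_option maxHeartbeats 1000000


open Polynomial

/-- `f_P(X) = ∏_{i∈P} (X − θ^i)` for a subset `P ⊆ ℤ/nℤ`. -/
noncomputable def fPoly {E : Type*} [Field E] {n : ℕ} (θ : E) (P : Finset (ZMod n)) : E[X] :=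
  ∏ i ∈ P, (X - C (θ ^ i.val))

/-- The unique representative of degree `< n` of an element of `F[X]/⟨X^n−1⟩`. -/
noncomputable def stdRep {F : Type*} [Field F] {n : ℕ} (hn : n ≠ 0)
    (x : AdjoinRoot (X ^ n - 1 : F[X])) : F[X] :=
  AdjoinRoot.modByMonicHom
    (by simpa using monic_X_pow_sub_C (1 : F) hn : (X ^ n - 1 : F[X]).Monic) x

/-- The cyclic code in `F[X]/⟨X^n−1⟩` with check polynomial `h`. -/
noncomputable def cyclicCode (F : Type*) [Field F] (n : ℕ) (h : F[X]) :
    Submodule F (AdjoinRoot (X ^ n - 1 : F[X])) :=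
  LinearMap.ker (LinearMap.mulRight F (AdjoinRoot.mk (X ^ n - 1 : F[X]) h))

/-- The Euclidean dual of a code `C ⊆ F[X]/⟨X^n−1⟩`. -/
noncomputable def dualCode (F : Type*) [Field F] (n : ℕ) (hn : n ≠ 0)
    (Cd : Set (AdjoinRoot (X ^ n - 1 : F[X]))) : Set (AdjoinRoot (X ^ n - 1 : F[X])) :=
  {y | ∀ x ∈ Cd, ∑ i ∈ Finset.range n, (stdRep hn x).coeff i * (stdRep hn y).coeff i = 0}

section Aux

variable {F : Type*} [Field F] {n : ℕ} [NeZero n]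
  {E : Type*} [Field E] [Algebra F E] {θ : E}

theorem monicXn : (X ^ n - 1 : F[X]).Monic := by
  simpa using monic_X_pow_sub_C (1 : F) (NeZero.ne n)

theorem mk_stdRep (x : AdjoinRoot (X ^ n - 1 : F[X])) :
    AdjoinRoot.mk _ (stdRep (NeZero.ne n) x) = x := by
  unfold stdRep
  exact AdjoinRoot.mk_leftInverse _ x

theorem degree_stdRep (x : AdjoinRoot (X ^ n - 1 : F[X])) :
    (stdRep (NeZero.ne n) x).degree < n := by
  obtain ⟨p, rfl⟩ := AdjoinRoot.mk_surjective x
  unfold stdRep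
  rw [AdjoinRoot.modByMonicHom_mk]
  have := degree_modByMonic_lt p (monicXn (F := F) (n := n))
  have hd : (X ^ n - 1 : F[X]).degree = n := by
    simpa using degree_X_pow_sub_C (Nat.pos_of_ne_zero (NeZero.ne n)) (1 : F)
  rwa [hd] at this

/-- evaluation at `θ^j` as ring hom on the quotient -/
noncomputable def ev (hθ1 : θ ^ n = 1) (j : ZMod n) :
    AdjoinRoot (X ^ n - 1 : F[X]) →+* E :=
  AdjoinRoot.lift (algebraMap F E) (θ ^ j.val) (by
    rw [eval₂_sub, eval₂_pow, eval₂_X, eval₂_one, ← pow_mul, mul_comm, pow_mul, hθ1,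
      one_pow, sub_self])

theorem ev_mk (hθ1 : θ ^ n = 1) (j : ZMod n) (p : F[X]) :
    ev (F := F) hθ1 j (AdjoinRoot.mk _ p) = (p.map (algebraMap F E)).eval (θ ^ j.val) := by
  rw [ev, AdjoinRoot.lift_mk, eval₂_eq_eval_map]

theorem ev_stdRep (hθ1 : θ ^ n = 1) (j : ZMod n) (x : AdjoinRoot (X ^ n - 1 : F[X])) :
    ((stdRep (NeZero.ne n) x).map (algebraMap F E)).eval (θ ^ j.val) = ev hθ1 j x := by
  conv_rhs => rw [← mk_stdRep x]
  rw [ev_mk]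

theorem pow_natCast_val (hθ : IsPrimitiveRoot θ n) (a : ℕ) :
    θ ^ ((a : ZMod n)).val = θ ^ a := by
  rw [ZMod.val_natCast]
  conv_rhs => rw [← Nat.mod_add_div a n, pow_add, pow_mul, hθ.pow_eq_one, one_pow, mul_one]

theorem pow_congr (hθ : IsPrimitiveRoot θ n) {a b : ℕ} (h : (a : ZMod n) = (b : ZMod n)) :
    θ ^ a = θ ^ b := by
  rw [← pow_natCast_val hθ a, h, pow_natCast_val hθ]

theorem pow_val_congr (hθ : IsPrimitiveRoot θ n) {j : ZMod n} {a : ℕ} (h : (a : ZMod n) = j) :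
    θ ^ j.val = θ ^ a := by
  apply pow_congr hθ
  rw [h, ZMod.natCast_val, ZMod.cast_id]

theorem uInj (hθ : IsPrimitiveRoot θ n) : Function.Injective (fun j : ZMod n => θ ^ j.val) := by
  intro a b h
  have := hθ.pow_inj (ZMod.val_lt a) (ZMod.val_lt b) h
  exact ZMod.val_injective n this

/-- factorization of `X^n - 1` over `E` -/
theorem prod_zmod' {β : Type*} [CommMonoid β] (f : ℕ → β) :
    ∏ j : ZMod n, f (ZMod.val j) = ∏ i ∈ Finset.range n, f i := by
  apply Finset.prod_nbij' (fun j => ZMod.val j) (fun i => (i : ZMod n)) <;> intros <;>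
    simp_all [ZMod.val_lt, ZMod.natCast_rightInverse _, ZMod.val_natCast,
      Nat.mod_eq_of_lt, Finset.mem_range]

theorem sum_zmod' {β : Type*} [AddCommMonoid β] (f : ℕ → β) :
    ∑ j : ZMod n, f (ZMod.val j) = ∑ i ∈ Finset.range n, f i := by
  apply Finset.sum_nbij' (fun j => ZMod.val j) (fun i => (i : ZMod n)) <;> intros <;>
    simp_all [ZMod.val_lt, ZMod.natCast_rightInverse _, ZMod.val_natCast,
      Nat.mod_eq_of_lt, Finset.mem_range]

/-- factorization of `X^n - 1` over `E` -/
theorem Xn_factor (hθ : IsPrimitiveRoot θ n) :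
    ((X ^ n - 1 : F[X]).map (algebraMap F E)) = ∏ j : ZMod n, (X - C (θ ^ j.val)) := by
  classical
  have hn : 0 < n := Nat.pos_of_ne_zero (NeZero.ne n)
  have hinj : Set.InjOn (θ ^ ·) (Finset.range n) := by
    intro a ha b hb h
    exact hθ.pow_inj (Finset.mem_range.1 ha) (Finset.mem_range.1 hb) h
  have h1 : nthRootsFinset n (1 : E) = (Finset.range n).image (θ ^ ·) := by
    symm
    apply Finset.eq_of_subset_of_card_le
    · intro x hx
      simp only [Finset.mem_image, Finset.mem_range] at hx
      obtain ⟨i, hi, rfl⟩ := hx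
      exact (Polynomial.mem_nthRootsFinset hn _).2
        (by rw [← pow_mul, mul_comm, pow_mul, hθ.pow_eq_one, one_pow])
    · rw [hθ.card_nthRootsFinset, Finset.card_image_of_injOn hinj, Finset.card_range]
  have h2 : (X ^ n - 1 : E[X]) = ∏ j : ZMod n, (X - C (θ ^ j.val)) := by
    rw [X_pow_sub_one_eq_prod hn hθ, h1, Finset.prod_image hinj, ← prod_zmod' (fun i => X - C (θ ^ i))]
  rw [Polynomial.map_sub, Polynomial.map_pow, Polynomial.map_one, map_X, h2]


theorem prod_linear_dvd (hθ : IsPrimitiveRoot θ n) (S : Finset (ZMod n)) {A : E[X]}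
    (hA : ∀ j ∈ S, A.eval (θ ^ (j : ZMod n).val) = 0) :
    (∏ j ∈ S, (X - C (θ ^ (j : ZMod n).val))) ∣ A := by
  classical
  rcases eq_or_ne A 0 with rfl | hA0
  · exact dvd_zero _
  have hprod : (∏ j ∈ S, (X - C (θ ^ (j : ZMod n).val)))
      = ((S.val.map (fun j : ZMod n => θ ^ j.val)).map (fun a => X - C a)).prod := by
    rw [Multiset.map_map, Finset.prod_eq_multiset_prod]
    rfl
  rw [hprod, Multiset.prod_X_sub_C_dvd_iff_le_roots hA0]
  have hnd : (S.val.map (fun j : ZMod n => θ ^ j.val)).Nodup :=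
    Multiset.Nodup.map (uInj hθ) S.nodup
  refine (Multiset.le_iff_subset hnd).2 ?_
  intro a ha
  simp only [Multiset.mem_map] at ha
  obtain ⟨j, hj, rfl⟩ := ha
  rw [Polynomial.mem_roots hA0]
  exact hA j hj

theorem dvd_eval (hθ : IsPrimitiveRoot θ n) {S : Finset (ZMod n)} {A : E[X]}
    (h : (∏ j ∈ S, (X - C (θ ^ (j : ZMod n).val))) ∣ A) {j : ZMod n} (hj : j ∈ S) :
    A.eval (θ ^ j.val) = 0 := by
  have h1 : (X - C (θ ^ j.val)) ∣ A := dvd_trans (Finset.dvd_prod_of_mem (fun j : ZMod n => X - C (θ ^ j.val)) hj) h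
  exact eval_eq_zero_of_dvd_of_eval_eq_zero h1 (by simp)

theorem mem_cyclicCode (hθ : IsPrimitiveRoot θ n) (P : Finset (ZMod n)) (fPF : F[X])
    (hfPF : fPF.map (algebraMap F E) = fPoly θ P) (x : AdjoinRoot (X ^ n - 1 : F[X])) :
    x ∈ cyclicCode F n fPF ↔ ∀ j ∉ P, ev hθ.pow_eq_one j x = 0 := by
  classical
  have hmem : x ∈ cyclicCode F n fPF ↔ x * (AdjoinRoot.mk _ fPF) = 0 := by
    rw [cyclicCode, LinearMap.mem_ker, LinearMap.mulRight_apply]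
  set a := stdRep (NeZero.ne n) x with ha
  have hx : x = AdjoinRoot.mk _ a := (mk_stdRep x).symm
  have h2 : x * (AdjoinRoot.mk _ fPF) = AdjoinRoot.mk _ (a * fPF) := by
    rw [hx, map_mul]
  have h3 : x ∈ cyclicCode F n fPF ↔ (X ^ n - 1 : F[X]) ∣ a * fPF := by
    rw [hmem, h2, AdjoinRoot.mk_eq_zero]
  have h4 : ((X ^ n - 1 : F[X]) ∣ a * fPF) ↔
      (∏ j ∈ Pᶜ, (X - C (θ ^ (j : ZMod n).val))) ∣ a.map (algebraMap F E) := by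
    rw [← map_dvd_map' (algebraMap F E), Polynomial.map_mul, hfPF, Xn_factor hθ,
      ← Finset.prod_mul_prod_compl P (fun j => (X - C (θ ^ (j : ZMod n).val)))]
    rw [fPoly, mul_comm (∏ j ∈ P, _)]
    constructor
    · intro h
      exact (mul_dvd_mul_iff_right (fun hz => by
        have : (fPoly θ P) ≠ 0 := by
          apply Polynomial.Monic.ne_zero
          exact monic_prod_of_monic _ _ (fun i _ => monic_X_sub_C _)
        exact this (by rw [fPoly]; exact hz))).1 h
    · intro h
      exact mul_dvd_mul h dvd_rfl
  rw [h3, h4]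
  constructor
  · intro h j hj
    rw [← ev_stdRep hθ.pow_eq_one]
    exact dvd_eval hθ h (Finset.mem_compl.2 hj)
  · intro h
    apply prod_linear_dvd hθ
    intro j hj
    rw [ev_stdRep hθ.pow_eq_one]
    exact h j (Finset.mem_compl.1 hj)


variable [Fintype F]

theorem exists_preimage (x : E) (hx : x ^ (Fintype.card F) = x) :
    ∃ a : F, algebraMap F E a = x := by
  classical
  set q := Fintype.card F with hq
  have hq2 : 1 < q := Fintype.one_lt_card
  set f : E[X] := X ^ q - X with hf
  have hdeg : f.degree = q := by
    rw [hf]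
    rw [degree_sub_eq_left_of_degree_lt (by
      rw [degree_X_pow, degree_X]
      exact_mod_cast hq2), degree_X_pow]
  have hf0 : f ≠ 0 := by
    intro h
    rw [h, degree_zero] at hdeg
    exact (by simp : ¬ ((⊥ : WithBot ℕ) = (q : WithBot ℕ))) hdeg
  have hroot : ∀ y : E, y ^ q = y → y ∈ f.roots.toFinset := by
    intro y hy
    rw [Multiset.mem_toFinset, Polynomial.mem_roots hf0]
    simp [hf, IsRoot, hy]
  by_contra hcon
  push_neg at hcon
  set T : Finset E := Finset.univ.image (algebraMap F E) with hT
  have hxT : x ∉ T := by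
    intro hmem
    rw [hT, Finset.mem_image] at hmem
    obtain ⟨a, _, ha⟩ := hmem
    exact hcon a ha
  have hsub : insert x T ⊆ f.roots.toFinset := by
    intro y hy
    rcases Finset.mem_insert.1 hy with rfl | hyT
    · exact hroot y hx
    · rw [hT, Finset.mem_image] at hyT
      obtain ⟨a, _, rfl⟩ := hyT
      apply hroot
      rw [← map_pow, FiniteField.pow_card]
  have hcard1 : (insert x T).card = q + 1 := by
    rw [Finset.card_insert_of_notMem hxT, hT,
      Finset.card_image_of_injective _ (algebraMap F E).injective, Finset.card_univ]
  have hcard2 : f.roots.toFinset.card ≤ q := by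
    calc f.roots.toFinset.card ≤ Multiset.card f.roots := f.roots.toFinset_card_le
    _ ≤ f.natDegree := Polynomial.card_roots' f
    _ = q := natDegree_eq_of_degree_eq_some hdeg
  have := Finset.card_le_card hsub
  omega

theorem exists_lift_prod (hθ : IsPrimitiveRoot θ n) (hcop : Nat.Coprime (Fintype.card F) n)
    (Q : Finset (ZMod n)) (hQ : Q.image (fun i => (Fintype.card F : ZMod n) * i) = Q) :
    ∃ g : F[X], g.map (algebraMap F E) = ∏ j ∈ Q, (X - C (θ ^ (j : ZMod n).val)) := by
  classical
  set q := Fintype.card F with hq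
  set pE : E[X] := ∏ j ∈ Q, (X - C (θ ^ (j : ZMod n).val)) with hpE
  obtain ⟨p, hchar⟩ := CharP.exists F
  have hpprime : p.Prime := (CharP.char_is_prime F p)
  haveI : CharP E p := charP_of_injective_algebraMap (algebraMap F E).injective p
  obtain ⟨e, _, hcard⟩ := FiniteField.card F p
  haveI : Fact p.Prime := ⟨hpprime⟩
  set hom : E →+* E := iterateFrobenius E p e with hhom
  have hompow : ∀ y : E, hom y = y ^ q := by
    intro y
    rw [hhom, iterateFrobenius_def, ← hcard]
  have hmapfix : pE.map hom = pE := by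
    rw [hpE, Polynomial.map_prod]
    have hstep : ∀ j : ZMod n, (X - C (θ ^ (j : ZMod n).val)).map hom
        = X - C (θ ^ ((q : ZMod n) * j).val) := by
      intro j
      rw [Polynomial.map_sub, map_X, map_C, hompow, ← pow_mul]
      congr 2
      refine (pow_val_congr hθ ?_).symm
      push_cast
      rw [ZMod.natCast_val, ZMod.cast_id, mul_comm]
    simp_rw [hstep]
    set u : (ZMod n)ˣ := ZMod.unitOfCoprime q hcop with hu
    have hinj : Function.Injective (fun i : ZMod n => (q : ZMod n) * i) := by
      intro a b h
      have : (u : ZMod n) * a = (u : ZMod n) * b := by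
        simpa [hu, ZMod.coe_unitOfCoprime] using h
      exact (Units.isUnit u).mul_right_injective this
    calc ∏ j ∈ Q, (X - C (θ ^ ((q : ZMod n) * j).val))
        = ∏ i ∈ Q.image (fun i : ZMod n => (q : ZMod n) * i), (X - C (θ ^ (i : ZMod n).val)) := by
          rw [Finset.prod_image (fun a _ b _ h => hinj h)]
      _ = pE := by rw [hQ]
  have hcoeff : ∀ k, ∃ a : F, algebraMap F E a = pE.coeff k := by
    intro k
    apply exists_preimage
    have := congrArg (fun r => r.coeff k) hmapfix
    simpa [Polynomial.coeff_map, hompow] using this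
  have : pE ∈ Polynomial.lifts (algebraMap F E) := by
    rw [Polynomial.lifts_iff_coeff_lifts]
    intro k
    obtain ⟨a, ha⟩ := hcoeff k
    exact ⟨a, ha⟩
  rw [Polynomial.mem_lifts] at this
  obtain ⟨g, hg⟩ := this
  exact ⟨g, hg⟩


theorem geom_root_ne {ζ : E} (hζn : ζ ^ n = 1) (h : ζ ≠ 1) :
    ∑ r ∈ Finset.range n, ζ ^ r = 0 := by
  rw [geom_sum_eq h, hζn, sub_self, zero_div]

theorem theta_ne_zero (hθ : IsPrimitiveRoot θ n) (j : ZMod n) : θ ^ j.val ≠ 0 :=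
  pow_ne_zero _ (hθ.ne_zero (NeZero.ne n))

theorem u_neg (hθ : IsPrimitiveRoot θ n) (j : ZMod n) :
    θ ^ (-j).val = (θ ^ j.val)⁻¹ := by
  refine eq_inv_of_mul_eq_one_left ?_
  rw [← pow_add]
  have : (((-j).val + j.val : ℕ) : ZMod n) = ((0 : ℕ) : ZMod n) := by
    push_cast
    rw [ZMod.natCast_val, ZMod.natCast_val, ZMod.cast_id, ZMod.cast_id]
    ring
  rw [pow_congr hθ this, pow_zero]

theorem orthogonality (hθ : IsPrimitiveRoot θ n) {i k : ℕ} (hi : i < n) (hk : k < n) :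
    ∑ j : ZMod n, (θ ^ (j : ZMod n).val) ^ i / (θ ^ (j : ZMod n).val) ^ k
      = if i = k then (n : E) else 0 := by
  classical
  have hterm : ∀ j : ZMod n, (θ ^ (j : ZMod n).val) ^ i / (θ ^ (j : ZMod n).val) ^ k
      = (θ ^ i / θ ^ k) ^ j.val := by
    intro j
    rw [div_pow, ← pow_mul, ← pow_mul, ← pow_mul, ← pow_mul, mul_comm j.val i, mul_comm j.val k]
  simp_rw [hterm]
  rw [sum_zmod' (fun r => (θ ^ i / θ ^ k) ^ r)]
  have hζn : (θ ^ i / θ ^ k) ^ n = 1 := by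
    rw [div_pow, ← pow_mul, ← pow_mul, mul_comm i n, mul_comm k n, pow_mul, pow_mul,
      hθ.pow_eq_one, one_pow, one_pow, div_one]
  have hiff : θ ^ i / θ ^ k = 1 ↔ i = k := by
    rw [div_eq_one_iff_eq (pow_ne_zero _ (hθ.ne_zero (NeZero.ne n)))]
    exact ⟨fun h => hθ.pow_inj hi hk h, fun h => by rw [h]⟩
  rcases eq_or_ne i k with h | h
  · rw [if_pos h, hiff.2 h]
    simp
  · rw [if_neg h, geom_root_ne hζn (fun hc => h (hiff.1 hc))]

theorem natDegree_stdRep_lt (x : AdjoinRoot (X ^ n - 1 : F[X])) :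
    (stdRep (NeZero.ne n) x).natDegree < n := by
  have hd := degree_stdRep x
  rcases eq_or_ne (stdRep (NeZero.ne n) x) 0 with h0 | h0
  · rw [h0, natDegree_zero]
    exact Nat.pos_of_ne_zero (NeZero.ne n)
  · exact natDegree_lt_iff_degree_lt h0 |>.2 hd

theorem pairing_fourier (hθ : IsPrimitiveRoot θ n) (x y : AdjoinRoot (X ^ n - 1 : F[X])) :
    (algebraMap F E (∑ i ∈ Finset.range n,
        (stdRep (NeZero.ne n) x).coeff i * (stdRep (NeZero.ne n) y).coeff i)) * n
      = ∑ j : ZMod n, ev hθ.pow_eq_one j x * ev hθ.pow_eq_one (-j) y := by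
  classical
  set a := stdRep (NeZero.ne n) x with ha
  set b := stdRep (NeZero.ne n) y with hb
  set A := a.map (algebraMap F E) with hA
  set B := b.map (algebraMap F E) with hB
  have hAd : A.natDegree < n := lt_of_le_of_lt natDegree_map_le (natDegree_stdRep_lt x)
  have hBd : B.natDegree < n := lt_of_le_of_lt natDegree_map_le (natDegree_stdRep_lt y)
  have hevx : ∀ j : ZMod n, ev (F := F) hθ.pow_eq_one j x
      = ∑ i ∈ Finset.range n, A.coeff i * (θ ^ (j : ZMod n).val) ^ i := by
    intro j
    rw [← ev_stdRep hθ.pow_eq_one j x, ← ha, ← hA, eval_eq_sum_range' hAd]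
  have hevy : ∀ j : ZMod n, ev (F := F) hθ.pow_eq_one (-j) y
      = ∑ k ∈ Finset.range n, B.coeff k * ((θ ^ (j : ZMod n).val) ^ k)⁻¹ := by
    intro j
    rw [← ev_stdRep hθ.pow_eq_one (-j) y, ← hb, ← hB, eval_eq_sum_range' hBd]
    exact Finset.sum_congr rfl (fun k _ => by rw [u_neg hθ, inv_pow])
  calc (algebraMap F E (∑ i ∈ Finset.range n, a.coeff i * b.coeff i)) * n
      = ∑ i ∈ Finset.range n, A.coeff i * B.coeff i * (n : E) := by
        rw [map_sum, Finset.sum_mul]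
        exact Finset.sum_congr rfl (fun i _ => by rw [map_mul, hA, hB, coeff_map, coeff_map])
    _ = ∑ i ∈ Finset.range n, ∑ k ∈ Finset.range n,
          A.coeff i * B.coeff k * (if i = k then (n : E) else 0) := by
        refine Finset.sum_congr rfl (fun i hi => ?_)
        simp only [mul_ite, mul_zero]
        rw [Finset.sum_ite_eq (Finset.range n) i (fun k => A.coeff i * B.coeff k * (n : E)),
          if_pos hi]
    _ = ∑ i ∈ Finset.range n, ∑ k ∈ Finset.range n, A.coeff i * B.coeff k *
          (∑ j : ZMod n, (θ ^ (j : ZMod n).val) ^ i / (θ ^ (j : ZMod n).val) ^ k) := by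
        refine Finset.sum_congr rfl (fun i hi => Finset.sum_congr rfl (fun k hk => ?_))
        rw [orthogonality hθ (Finset.mem_range.1 hi) (Finset.mem_range.1 hk)]
    _ = ∑ j : ZMod n, ev hθ.pow_eq_one j x * ev hθ.pow_eq_one (-j) y := by
        have hthis : ∀ (j : ZMod n), ev (F := F) hθ.pow_eq_one j x * ev hθ.pow_eq_one (-j) y
            = ∑ i ∈ Finset.range n, ∑ k ∈ Finset.range n,
                A.coeff i * B.coeff k * ((θ ^ (j : ZMod n).val) ^ i / (θ ^ (j : ZMod n).val) ^ k) := by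
          intro j
          rw [hevx, hevy, Finset.sum_mul_sum]
          exact Finset.sum_congr rfl (fun i _ => Finset.sum_congr rfl (fun k _ => by
            rw [div_eq_mul_inv]; ring))
        calc ∑ i ∈ Finset.range n, ∑ k ∈ Finset.range n, A.coeff i * B.coeff k *
              (∑ j : ZMod n, (θ ^ (j : ZMod n).val) ^ i / (θ ^ (j : ZMod n).val) ^ k)
            = ∑ i ∈ Finset.range n, ∑ k ∈ Finset.range n, ∑ j : ZMod n,
                A.coeff i * B.coeff k * ((θ ^ (j : ZMod n).val) ^ i / (θ ^ (j : ZMod n).val) ^ k) := by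
              simp_rw [Finset.mul_sum]
          _ = ∑ i ∈ Finset.range n, ∑ j : ZMod n, ∑ k ∈ Finset.range n,
                A.coeff i * B.coeff k * ((θ ^ (j : ZMod n).val) ^ i / (θ ^ (j : ZMod n).val) ^ k) :=
              Finset.sum_congr rfl (fun i _ => Finset.sum_comm)
          _ = ∑ j : ZMod n, ∑ i ∈ Finset.range n, ∑ k ∈ Finset.range n,
                A.coeff i * B.coeff k * ((θ ^ (j : ZMod n).val) ^ i / (θ ^ (j : ZMod n).val) ^ k) :=
              Finset.sum_comm
          _ = ∑ j : ZMod n, ev hθ.pow_eq_one j x * ev hθ.pow_eq_one (-j) y :=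
              Finset.sum_congr rfl (fun j _ => (hthis j).symm)


theorem compl_invariant {f : ZMod n → ZMod n} (hinj : Function.Injective f)
    {Q : Finset (ZMod n)} (hQ : Q.image f = Q) : Qᶜ.image f = Qᶜ := by
  classical
  apply Finset.eq_of_subset_of_card_le
  · intro x hx
    rw [Finset.mem_image] at hx
    obtain ⟨a, ha, rfl⟩ := hx
    rw [Finset.mem_compl] at ha ⊢
    intro hfa
    rw [← hQ, Finset.mem_image] at hfa
    obtain ⟨b, hb, hba⟩ := hfa
    exact ha (hinj hba ▸ hb)
  · rw [Finset.card_image_of_injective _ hinj]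

theorem natCast_ne_zero_of_coprime (hcop : Nat.Coprime (Fintype.card F) n) :
    (n : E) ≠ 0 := by
  obtain ⟨p, hchar⟩ := CharP.exists F
  have hpprime : p.Prime := (CharP.char_is_prime F p)
  haveI : CharP E p := charP_of_injective_algebraMap (algebraMap F E).injective p
  intro h
  have hpn : p ∣ n := (CharP.cast_eq_zero_iff E p n).1 h
  have hpq : p ∣ Fintype.card F := by
    obtain ⟨e, _, hcard⟩ := FiniteField.card F p
    rw [hcard]
    exact dvd_pow_self p (PNat.ne_zero e)
  have := Nat.dvd_gcd hpq hpn
  rw [Nat.Coprime] at hcop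
  rw [hcop] at this
  rw [Nat.dvd_one] at this
  exact hpprime.ne_one this

theorem mem_dualCode (hθ : IsPrimitiveRoot θ n) (hcop : Nat.Coprime (Fintype.card F) n)
    (P : Finset (ZMod n))
    (hP : P.image (fun i => (Fintype.card F : ZMod n) * i) = P)
    (fPF : F[X]) (hfPF : fPF.map (algebraMap F E) = fPoly θ P)
    (y : AdjoinRoot (X ^ n - 1 : F[X])) :
    y ∈ dualCode F n (NeZero.ne n) (cyclicCode F n fPF :
        Set (AdjoinRoot (X ^ n - 1 : F[X]))) ↔
      ∀ j ∈ P, ev hθ.pow_eq_one (-j) y = 0 := by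
  classical
  have hne : (n : E) ≠ 0 := natCast_ne_zero_of_coprime hcop
  have hstep : ∀ x : AdjoinRoot (X ^ n - 1 : F[X]),
      ((∑ i ∈ Finset.range n, (stdRep (NeZero.ne n) x).coeff i *
        (stdRep (NeZero.ne n) y).coeff i = 0) ↔
      (∑ j : ZMod n, ev hθ.pow_eq_one j x * ev hθ.pow_eq_one (-j) y = 0)) := by
    intro x
    rw [← pairing_fourier hθ x y]
    constructor
    · intro h; rw [h, map_zero, zero_mul]
    · intro h
      rcases mul_eq_zero.1 h with h1 | h1
      · exact (algebraMap F E).injective (by rw [h1, map_zero])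
      · exact absurd h1 hne
  rw [dualCode, Set.mem_setOf_eq]
  constructor
  · intro h j0 hj0
    set q := Fintype.card F with hq
    set u : (ZMod n)ˣ := ZMod.unitOfCoprime q hcop with hu
    have hinj : Function.Injective (fun i : ZMod n => (q : ZMod n) * i) := by
      intro a b hab
      have : (u : ZMod n) * a = (u : ZMod n) * b := by
        simpa [hu, ZMod.coe_unitOfCoprime] using hab
      exact (Units.isUnit u).mul_right_injective this
    obtain ⟨gc, hgc⟩ := exists_lift_prod hθ hcop Pᶜ (compl_invariant hinj hP)
    set Gc : E[X] := ∏ j ∈ Pᶜ, (X - C (θ ^ (j : ZMod n).val)) with hGc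
    have hxk : ∀ k : ℕ, (AdjoinRoot.mk _ (gc * X ^ k)) ∈ cyclicCode F n fPF := by
      intro k
      rw [mem_cyclicCode hθ P fPF hfPF]
      intro j hj
      rw [ev_mk, Polynomial.map_mul, Polynomial.map_pow, map_X, eval_mul, hgc,
        dvd_eval hθ (dvd_refl Gc) (Finset.mem_compl.2 hj), zero_mul]
    have hevxk : ∀ (k : ℕ) (j : ZMod n), ev (F := F) hθ.pow_eq_one j (AdjoinRoot.mk _ (gc * X ^ k))
        = Gc.eval (θ ^ (j : ZMod n).val) * (θ ^ (j : ZMod n).val) ^ k := by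
      intro k j
      rw [ev_mk, Polynomial.map_mul, Polynomial.map_pow, map_X, eval_mul, hgc, eval_pow, eval_X]
    have hik : ∀ k : ℕ, ∑ j : ZMod n, Gc.eval (θ ^ (j : ZMod n).val) * (θ ^ (j : ZMod n).val) ^ k
        * ev hθ.pow_eq_one (-j) y = 0 := by
      intro k
      have h0 := (hstep (AdjoinRoot.mk _ (gc * X ^ k))).1 (h _ (hxk k))
      rw [← h0]
      exact Finset.sum_congr rfl (fun j _ => by rw [hevxk k j])
    set v : ZMod n → E := fun j => θ ^ (j : ZMod n).val with hv
    have hvinj : Set.InjOn v (Finset.univ : Finset (ZMod n)) := (uInj hθ).injOn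
    set p : E[X] := Lagrange.basis Finset.univ v j0 with hp
    have hpdeg : p.degree = ((Fintype.card (ZMod n) - 1 : ℕ) : WithBot ℕ) := by
      rw [hp]
      have := Lagrange.degree_basis hvinj (Finset.mem_univ j0)
      rwa [Finset.card_univ] at this
    have hpne : p ≠ 0 := by
      intro h0
      rw [h0, degree_zero] at hpdeg
      exact absurd hpdeg.symm (by simp)
    have hpnat : p.natDegree < n := by
      have := natDegree_eq_of_degree_eq_some hpdeg
      rw [this, ZMod.card]
      have := Nat.pos_of_ne_zero (NeZero.ne n)
      omega
    have hsum : ∑ j : ZMod n, Gc.eval (v j) * ev (F := F) hθ.pow_eq_one (-j) y * p.eval (v j)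
        = 0 := by
      calc ∑ j : ZMod n, Gc.eval (v j) * ev (F := F) hθ.pow_eq_one (-j) y * p.eval (v j)
          = ∑ j : ZMod n, ∑ k ∈ Finset.range n,
              p.coeff k * (Gc.eval (v j) * (v j) ^ k * ev hθ.pow_eq_one (-j) y) := by
            refine Finset.sum_congr rfl (fun j _ => ?_)
            rw [eval_eq_sum_range' hpnat, Finset.mul_sum]
            exact Finset.sum_congr rfl (fun k _ => by ring)
        _ = ∑ k ∈ Finset.range n, ∑ j : ZMod n,
              p.coeff k * (Gc.eval (v j) * (v j) ^ k * ev hθ.pow_eq_one (-j) y) :=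
            Finset.sum_comm
        _ = 0 := by
            apply Finset.sum_eq_zero
            intro k _
            rw [← Finset.mul_sum, hik k, mul_zero]
    have hcollapse : ∑ j : ZMod n, Gc.eval (v j) * ev (F := F) hθ.pow_eq_one (-j) y * p.eval (v j)
        = Gc.eval (v j0) * ev hθ.pow_eq_one (-j0) y := by
      rw [Finset.sum_eq_single j0]
      · rw [hp, Lagrange.eval_basis_self hvinj (Finset.mem_univ j0), mul_one]
      · intro j _ hjne
        rw [hp, Lagrange.eval_basis_of_ne (Ne.symm hjne) (Finset.mem_univ j), mul_zero]
      · intro habs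
        exact absurd (Finset.mem_univ j0) habs
    have hGc0 : Gc.eval (v j0) ≠ 0 := by
      rw [hGc, eval_prod]
      apply Finset.prod_ne_zero_iff.2
      intro m hm
      rw [eval_sub, eval_X, eval_C]
      apply sub_ne_zero.2
      intro hc
      have := uInj hθ hc
      rw [this] at hj0
      exact (Finset.mem_compl.1 hm) hj0
    rcases mul_eq_zero.1 (hcollapse ▸ hsum) with h1 | h1
    · exact absurd h1 hGc0
    · exact h1
  · intro h x hx
    rw [hstep x]
    apply Finset.sum_eq_zero
    intro j _
    by_cases hj : j ∈ P
    · rw [h j hj, mul_zero]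
    · rw [(mem_cyclicCode hθ P fPF hfPF x).1 hx j hj, zero_mul]


theorem rootXn_pow : (AdjoinRoot.root (X ^ n - 1 : F[X])) ^ n = 1 := by
  have h := AdjoinRoot.mk_self (f := (X ^ n - 1 : F[X]))
  rw [map_sub, map_pow, map_one, AdjoinRoot.mk_X, sub_eq_zero] at h
  exact h

theorem rootXn_pow_congr {a c : ℕ} (h : a ≡ c [MOD n]) :
    (AdjoinRoot.root (X ^ n - 1 : F[X])) ^ a = (AdjoinRoot.root (X ^ n - 1 : F[X])) ^ c := by
  have key : ∀ d : ℕ, (AdjoinRoot.root (X ^ n - 1 : F[X])) ^ d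
      = (AdjoinRoot.root (X ^ n - 1 : F[X])) ^ (d % n) := by
    intro d
    conv_lhs => rw [← Nat.mod_add_div d n, pow_add, pow_mul, rootXn_pow, one_pow, mul_one]
  rw [key a, key c, h]

/-- the substitution `a(X) ↦ a(b·X^m)` on the quotient ring -/
noncomputable def Phi {b : F} (hb1 : b ^ n = 1) (m : ℕ) :
    AdjoinRoot (X ^ n - 1 : F[X]) →ₐ[F] AdjoinRoot (X ^ n - 1 : F[X]) :=
  AdjoinRoot.liftAlgHom _ (Algebra.ofId F _) (AdjoinRoot.mk _ (C b * X ^ m)) (by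
    change aeval _ _ = 0
    rw [map_sub, map_pow, map_one, aeval_X, ← map_pow, mul_pow, ← C_pow, hb1, C_1, one_mul,
      ← pow_mul, mul_comm m n, pow_mul, map_pow, map_pow, AdjoinRoot.mk_X, rootXn_pow, one_pow, sub_self])

theorem Phi_mk {b : F} (hb1 : b ^ n = 1) (m : ℕ) (p : F[X]) :
    Phi hb1 m (AdjoinRoot.mk _ p) = AdjoinRoot.mk _ (p.comp (C b * X ^ m)) := by
  rw [Phi, AdjoinRoot.liftAlgHom_mk]
  change aeval _ p = _
  rw [Polynomial.aeval_def, Polynomial.comp, AdjoinRoot.algebraMap_eq,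
    Polynomial.hom_eval₂ _ C (AdjoinRoot.mk (X ^ n - 1 : F[X])) _]
  rfl

theorem Phi_stdRep {b : F} (hb1 : b ^ n = 1) (m : ℕ) (x : AdjoinRoot (X ^ n - 1 : F[X])) :
    AdjoinRoot.mk _ ((stdRep (NeZero.ne n) x).comp (C b * X ^ m)) = Phi hb1 m x := by
  conv_rhs => rw [← mk_stdRep x]
  rw [Phi_mk]

theorem ev_Phi (hθ : IsPrimitiveRoot θ n) {b : F} (hb1 : b ^ n = 1) (m : ℕ) {τ : ZMod n}
    (hb : algebraMap F E b = θ ^ τ.val) (j : ZMod n) (x : AdjoinRoot (X ^ n - 1 : F[X])) :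
    ev hθ.pow_eq_one j (Phi hb1 m x) = ev hθ.pow_eq_one ((m : ZMod n) * j + τ) x := by
  conv_lhs => rw [← mk_stdRep x, Phi_mk, ev_mk]
  rw [← ev_stdRep hθ.pow_eq_one ((m : ZMod n) * j + τ) x]
  rw [Polynomial.map_comp, Polynomial.map_mul, Polynomial.map_pow, map_X, map_C, eval_comp,
    eval_mul, eval_C, eval_pow, eval_X, hb, ← pow_mul, ← pow_add]
  congr 1
  refine (pow_val_congr hθ ?_).symm
  push_cast
  rw [ZMod.natCast_val, ZMod.natCast_val, ZMod.cast_id, ZMod.cast_id]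
  ring

theorem Phi_Phi_eq_id {b b' : F} (hb1 : b ^ n = 1) (hb'1 : b' ^ n = 1) {s s' : ℕ}
    (hss' : s * s' ≡ 1 [MOD n]) (hbb' : b' * b ^ s = 1)
    (y : AdjoinRoot (X ^ n - 1 : F[X])) :
    Phi hb1 s' (Phi hb'1 s y) = y := by
  have hcomp : (Phi (F := F) (n := n) hb1 s').comp (Phi hb'1 s) = AlgHom.id F _ := by
    apply AdjoinRoot.algHom_ext
    rw [AlgHom.comp_apply, AlgHom.id_apply]
    rw [← AdjoinRoot.mk_X (f := (X ^ n - 1 : F[X])), Phi_mk, X_comp, Phi_mk, mul_comp, pow_comp,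
      C_comp, X_comp, mul_pow, ← C_pow, ← mul_assoc, ← C_mul, hbb', map_one, one_mul, ← pow_mul]
    rw [map_pow, AdjoinRoot.mk_X]
    rw [rootXn_pow_congr (by rw [Nat.mul_comm s' s]; exact hss' : s' * s ≡ 1 [MOD n]), pow_one]
  calc Phi hb1 s' (Phi hb'1 s y) = ((Phi (F := F) (n := n) hb1 s').comp (Phi hb'1 s)) y := rfl
    _ = y := by rw [hcomp]; rfl


theorem qmul_inj (hcop : Nat.Coprime (Fintype.card F) n) :
    Function.Injective (fun i : ZMod n => (Fintype.card F : ZMod n) * i) := by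
  intro a b hab
  set u : (ZMod n)ˣ := ZMod.unitOfCoprime (Fintype.card F) hcop with hu
  have : (u : ZMod n) * a = (u : ZMod n) * b := by
    simpa [hu, ZMod.coe_unitOfCoprime] using hab
  exact (Units.isUnit u).mul_right_injective this

theorem zeroset_subset (hθ : IsPrimitiveRoot θ n) (hcop : Nat.Coprime (Fintype.card F) n)
    {A B : Finset (ZMod n)}
    (hA : A.image (fun i => (Fintype.card F : ZMod n) * i) = A)
    (hsub : {y : AdjoinRoot (X ^ n - 1 : F[X]) | ∀ j ∉ A, ev hθ.pow_eq_one j y = 0}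
      ⊆ {y : AdjoinRoot (X ^ n - 1 : F[X]) | ∀ j ∉ B, ev hθ.pow_eq_one j y = 0}) :
    A ⊆ B := by
  classical
  intro j0 hj0
  by_contra hj0B
  obtain ⟨gA, hgA⟩ := exists_lift_prod hθ hcop Aᶜ (compl_invariant (qmul_inj hcop) hA)
  have hy : (AdjoinRoot.mk _ gA) ∈
      {y : AdjoinRoot (X ^ n - 1 : F[X]) | ∀ j ∉ A, ev hθ.pow_eq_one j y = 0} := by
    intro j hj
    rw [ev_mk, hgA]
    exact dvd_eval hθ (dvd_refl _) (Finset.mem_compl.2 hj)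
  have h0 := hsub hy j0 hj0B
  rw [ev_mk, hgA] at h0
  have hne : eval (θ ^ j0.val) (∏ j ∈ Aᶜ, (X - C (θ ^ (j : ZMod n).val))) ≠ 0 := by
    rw [eval_prod]
    apply Finset.prod_ne_zero_iff.2
    intro m hm
    rw [eval_sub, eval_X, eval_C]
    apply sub_ne_zero.2
    intro hc
    have := uInj hθ hc
    rw [this] at hj0
    exact (Finset.mem_compl.1 hm) hj0
  exact hne h0

theorem image_Phi_eq (hθ : IsPrimitiveRoot θ n)
    (P : Finset (ZMod n)) (fPF : F[X]) (hfPF : fPF.map (algebraMap F E) = fPoly θ P)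
    {s s' t : ℕ} (hss' : s * s' ≡ 1 [MOD n])
    {b b' : F} (hb1 : b ^ n = 1) (hb'1 : b' ^ n = 1)
    (hb : algebraMap F E b = θ ^ ((-(t : ZMod n)).val))
    (hb' : algebraMap F E b' = θ ^ (((s * t : ℕ) : ZMod n)).val)
    (hbb' : b' * b ^ s = 1) :
    (fun x => Phi hb1 s' x) '' (cyclicCode F n fPF : Set (AdjoinRoot (X ^ n - 1 : F[X])))
      = {y : AdjoinRoot (X ^ n - 1 : F[X]) |
          ∀ j ∉ P.image (fun i => (s : ZMod n) * (i + (t : ZMod n))), ev hθ.pow_eq_one j y = 0} := by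
  classical
  have hss'c : (s : ZMod n) * (s' : ZMod n) = 1 := by
    have := (ZMod.natCast_eq_natCast_iff _ _ _).2 hss'
    push_cast at this
    exact this
  ext y
  constructor
  · rintro ⟨x, hx, rfl⟩ j hj
    rw [ev_Phi hθ hb1 s' hb j x]
    apply (mem_cyclicCode hθ P fPF hfPF x).1 hx
    intro hc
    apply hj
    rw [Finset.mem_image]
    refine ⟨(s' : ZMod n) * j + (-(t : ZMod n)), hc, ?_⟩
    rw [add_assoc, neg_add_cancel, add_zero, ← mul_assoc, hss'c, one_mul]
  · intro hy
    refine ⟨Phi hb'1 s y, ?_, Phi_Phi_eq_id hb1 hb'1 hss' hbb' y⟩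
    rw [SetLike.mem_coe, mem_cyclicCode hθ P fPF hfPF]
    intro i hi
    rw [ev_Phi hθ hb'1 s hb' i y]
    apply hy
    intro hc
    rw [Finset.mem_image] at hc
    obtain ⟨i', hi', hii'⟩ := hc
    have : i' = i := by
      have h3 : (((s * t : ℕ) : ZMod n)) = (s : ZMod n) * (t : ZMod n) := by push_cast; ring
      have h2 : (s : ZMod n) * (i' + (t : ZMod n)) = (s : ZMod n) * (i + (t : ZMod n)) := by
        rw [hii', h3]; ring
      have h4 : ((s' : ZMod n) * (s : ZMod n)) * (i' + (t : ZMod n))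
          = ((s' : ZMod n) * (s : ZMod n)) * (i + (t : ZMod n)) := by
        rw [mul_assoc, mul_assoc, h2]
      rw [mul_comm (s' : ZMod n) (s : ZMod n), hss'c, one_mul, one_mul] at h4
      exact add_right_cancel h4
    rw [this] at hi'
    exact hi hi'

theorem image_compl {f : ZMod n → ZMod n} (hinj : Function.Injective f) (Q : Finset (ZMod n)) :
    Qᶜ.image f = (Q.image f)ᶜ := by
  classical
  apply Finset.eq_of_subset_of_card_le
  · intro x hx
    rw [Finset.mem_image] at hx
    obtain ⟨a, ha, rfl⟩ := hx
    rw [Finset.mem_compl] at ha ⊢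
    intro hmem
    rw [Finset.mem_image] at hmem
    obtain ⟨c, hc, hca⟩ := hmem
    exact ha ((hinj hca) ▸ hc)
  · rw [Finset.card_compl, Finset.card_image_of_injective _ hinj,
      Finset.card_image_of_injective _ hinj, Finset.card_compl]


theorem AB_iff (P : Finset (ZMod n)) (s t : ℕ) :
    (P.image (fun i : ZMod n => (s : ZMod n) * (i + (t : ZMod n)))
        = (P.image (fun i : ZMod n => -i))ᶜ) ↔
      (P.image (fun i : ZMod n => -(s : ZMod n) * (i + (t : ZMod n))) = Pᶜ) := by
  classical
  have hfun2 : (fun i : ZMod n => -(s : ZMod n) * (i + (t : ZMod n)))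
      = (fun j : ZMod n => -j) ∘ (fun i : ZMod n => (s : ZMod n) * (i + (t : ZMod n))) :=
    funext fun i => by simp [Function.comp, neg_mul]
  have hnegneg : ((fun j : ZMod n => -j) ∘ (fun j : ZMod n => -j)) = id := funext fun j => by simp
  constructor
  · intro h
    rw [hfun2, ← Finset.image_image, h, image_compl neg_injective, Finset.image_image,
      hnegneg, Finset.image_id]
  · intro h
    rw [hfun2] at h
    have h2 : (P.image ((fun j : ZMod n => -j)
        ∘ (fun i : ZMod n => (s : ZMod n) * (i + (t : ZMod n))))).image (fun j : ZMod n => -j)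
        = P.image (fun i : ZMod n => (s : ZMod n) * (i + (t : ZMod n))) := by
      rw [Finset.image_image]
      congr 1
      funext i
      simp [Function.comp]
    rw [← h2, h, image_compl neg_injective]

end Aux

/-- `C_P` is isometrically self-dual, i.e. `φ_{s,t}(C_P) = C_P^⊥` for some
isometry `φ_{s,t} : a(X) ↦ a(θ^{−t} X^{s⁻¹})`, if and only if there exist `s ∈ (ℤ/nℤ)^*`
and `t` with `q·t ≡ t (mod n)` such that `ℤ/nℤ` is the disjoint union of `P` and
`ρ_{−s,t}(P) = {−s(i+t) : i ∈ P}`. -/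
theorem stmt10 (F : Type*) [Field F] [Fintype F] (n : ℕ) [NeZero n] (hn : 0 < n)
    (hcop : Nat.Coprime (Fintype.card F) n)
    (E : Type*) [Field E] [Algebra F E] (θ : E) (hθ : IsPrimitiveRoot θ n)
    (P : Finset (ZMod n))
    (hP : P.image (fun i => (Fintype.card F : ZMod n) * i) = P)
    (fPF : F[X]) (hfPF : fPF.map (algebraMap F E) = fPoly θ P) :
    (∃ (s s' t : ℕ) (b : F), Nat.Coprime s n ∧ s * s' ≡ 1 [MOD n] ∧
        Fintype.card F * t ≡ t [MOD n] ∧ algebraMap F E b = (θ ^ t)⁻¹ ∧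
        (fun x => AdjoinRoot.mk (X ^ n - 1 : F[X]) ((stdRep hn.ne' x).comp (C b * X ^ s'))) ''
            (cyclicCode F n fPF : Set (AdjoinRoot (X ^ n - 1 : F[X]))) =
          dualCode F n hn.ne' (cyclicCode F n fPF : Set (AdjoinRoot (X ^ n - 1 : F[X])))) ↔
    (∃ s t : ℕ, Nat.Coprime s n ∧ Fintype.card F * t ≡ t [MOD n] ∧
        P.image (fun i => -(s : ZMod n) * (i + (t : ZMod n))) = Pᶜ) := by
  classical
  have hθ0 : θ ≠ 0 := hθ.ne_zero (NeZero.ne n)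
  -- the dual code as a zero set
  have hdual : dualCode F n hn.ne' (cyclicCode F n fPF :
        Set (AdjoinRoot (X ^ n - 1 : F[X])))
      = {y : AdjoinRoot (X ^ n - 1 : F[X]) |
          ∀ j ∉ (P.image (fun i : ZMod n => -i))ᶜ, ev hθ.pow_eq_one j y = 0} := by
    ext y
    rw [Set.mem_setOf_eq]
    constructor
    · intro hy j hj
      rw [Finset.notMem_compl, Finset.mem_image] at hj
      obtain ⟨i, hi, rfl⟩ := hj
      exact (mem_dualCode hθ hcop P hP fPF hfPF y).1 hy i hi
    · intro hy
      rw [show (dualCode F n hn.ne' (cyclicCode F n fPF :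
          Set (AdjoinRoot (X ^ n - 1 : F[X])))) = dualCode F n (NeZero.ne n) (cyclicCode F n fPF :
          Set (AdjoinRoot (X ^ n - 1 : F[X]))) from rfl]
      rw [mem_dualCode hθ hcop P hP fPF hfPF y]
      intro i hi
      apply hy
      rw [Finset.notMem_compl, Finset.mem_image]
      exact ⟨i, hi, rfl⟩
  -- invariance of the image of the neg map
  have hneginv : (P.image (fun i : ZMod n => -i)).image
      (fun i : ZMod n => (Fintype.card F : ZMod n) * i) = P.image (fun i : ZMod n => -i) := by
    rw [Finset.image_image]
    have hcomm : ((fun i : ZMod n => (Fintype.card F : ZMod n) * i) ∘ (fun i : ZMod n => -i))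
        = (fun i : ZMod n => -i) ∘ (fun i : ZMod n => (Fintype.card F : ZMod n) * i) :=
      funext fun i => by simp [Function.comp]
    rw [hcomm, ← Finset.image_image, hP]
  have hBinv := compl_invariant (qmul_inj hcop) hneginv
  constructor
  · rintro ⟨s, s', t, b, hco, hss', hqt, hb, heq⟩
    refine ⟨s, t, hco, hqt, ?_⟩
    have hqtc : (Fintype.card F : ZMod n) * (t : ZMod n) = (t : ZMod n) := by
      have := (ZMod.natCast_eq_natCast_iff _ _ _).2 hqt
      push_cast at this
      exact this
    have hb1 : b ^ n = 1 := by
      apply (algebraMap F E).injective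
      rw [map_pow, hb, map_one, inv_pow, ← pow_mul, mul_comm t n, pow_mul, hθ.pow_eq_one,
        one_pow, inv_one]
    have hbτ : algebraMap F E b = θ ^ ((-(t : ZMod n)).val) := by
      rw [hb, u_neg hθ ((t : ℕ) : ZMod n), pow_natCast_val hθ]
    obtain ⟨b', hb'⟩ : ∃ b' : F, algebraMap F E b' = θ ^ (((s * t : ℕ) : ZMod n)).val := by
      apply exists_preimage
      rw [← pow_mul]
      apply pow_congr hθ
      push_cast [ZMod.natCast_val, ZMod.cast_id]
      calc ((s : ZMod n) * t) * (Fintype.card F : ZMod n)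
          = (s : ZMod n) * ((Fintype.card F : ZMod n) * t) := by ring
        _ = (s : ZMod n) * t := by rw [hqtc]
    have hb'1 : b' ^ n = 1 := by
      apply (algebraMap F E).injective
      rw [map_pow, hb', map_one, ← pow_mul, mul_comm, pow_mul, hθ.pow_eq_one, one_pow]
    have hbb' : b' * b ^ s = 1 := by
      apply (algebraMap F E).injective
      rw [map_mul, map_pow, map_one, hb', hb, inv_pow, ← pow_mul, pow_natCast_val hθ,
        mul_comm t s]
      exact mul_inv_cancel₀ (pow_ne_zero _ hθ0)
    have hfun : (fun x => AdjoinRoot.mk (X ^ n - 1 : F[X])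
          ((stdRep hn.ne' x).comp (C b * X ^ s')))
        = fun x => Phi hb1 s' x := funext (fun x => Phi_stdRep hb1 s' x)
    rw [hfun, image_Phi_eq hθ P fPF hfPF hss' hb1 hb'1 hbτ hb' hbb', hdual] at heq
    have hAinv : (P.image (fun i : ZMod n => (s : ZMod n) * (i + (t : ZMod n)))).image
        (fun i : ZMod n => (Fintype.card F : ZMod n) * i)
        = P.image (fun i : ZMod n => (s : ZMod n) * (i + (t : ZMod n))) := by
      rw [Finset.image_image]
      have hcomm : ((fun i : ZMod n => (Fintype.card F : ZMod n) * i)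
            ∘ (fun i : ZMod n => (s : ZMod n) * (i + (t : ZMod n))))
          = (fun i : ZMod n => (s : ZMod n) * (i + (t : ZMod n)))
            ∘ (fun i : ZMod n => (Fintype.card F : ZMod n) * i) := by
        funext i
        simp only [Function.comp]
        calc (Fintype.card F : ZMod n) * ((s : ZMod n) * (i + (t : ZMod n)))
            = (s : ZMod n) * ((Fintype.card F : ZMod n) * i
                + (Fintype.card F : ZMod n) * (t : ZMod n)) := by ring
          _ = (s : ZMod n) * ((Fintype.card F : ZMod n) * i + (t : ZMod n)) := by rw [hqtc]
      rw [hcomm, ← Finset.image_image, hP]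
    have hAB : P.image (fun i : ZMod n => (s : ZMod n) * (i + (t : ZMod n)))
        = (P.image (fun i : ZMod n => -i))ᶜ :=
      Finset.Subset.antisymm
        (zeroset_subset hθ hcop hAinv (le_of_eq heq))
        (zeroset_subset hθ hcop hBinv (le_of_eq heq.symm))
    exact (AB_iff P s t).1 hAB
  · rintro ⟨s, t, hco, hqt, him⟩
    have hqtc : (Fintype.card F : ZMod n) * (t : ZMod n) = (t : ZMod n) := by
      have := (ZMod.natCast_eq_natCast_iff _ _ _).2 hqt
      push_cast at this
      exact this
    set u : (ZMod n)ˣ := ZMod.unitOfCoprime s hco with hu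
    set s' : ℕ := ((u⁻¹ : (ZMod n)ˣ) : ZMod n).val with hs'
    have hss' : s * s' ≡ 1 [MOD n] := by
      rw [← ZMod.natCast_eq_natCast_iff]
      push_cast [hs', ZMod.natCast_val, ZMod.cast_id]
      rw [show ((s : ℕ) : ZMod n) = (u : ZMod n) from (ZMod.coe_unitOfCoprime s hco).symm]
      exact_mod_cast u.mul_inv
    obtain ⟨b, hb⟩ : ∃ b : F, algebraMap F E b = (θ ^ t)⁻¹ := by
      apply exists_preimage
      rw [inv_pow, ← pow_mul]
      have : θ ^ (t * Fintype.card F) = θ ^ t := by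
        apply pow_congr hθ
        push_cast
        rw [mul_comm]
        exact hqtc
      rw [this]
    have hb1 : b ^ n = 1 := by
      apply (algebraMap F E).injective
      rw [map_pow, hb, map_one, inv_pow, ← pow_mul, mul_comm t n, pow_mul, hθ.pow_eq_one,
        one_pow, inv_one]
    have hbτ : algebraMap F E b = θ ^ ((-(t : ZMod n)).val) := by
      rw [hb, u_neg hθ ((t : ℕ) : ZMod n), pow_natCast_val hθ]
    obtain ⟨b', hb'⟩ : ∃ b' : F, algebraMap F E b' = θ ^ (((s * t : ℕ) : ZMod n)).val := by
      apply exists_preimage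
      rw [← pow_mul]
      apply pow_congr hθ
      push_cast [ZMod.natCast_val, ZMod.cast_id]
      calc ((s : ZMod n) * t) * (Fintype.card F : ZMod n)
          = (s : ZMod n) * ((Fintype.card F : ZMod n) * t) := by ring
        _ = (s : ZMod n) * t := by rw [hqtc]
    have hb'1 : b' ^ n = 1 := by
      apply (algebraMap F E).injective
      rw [map_pow, hb', map_one, ← pow_mul, mul_comm, pow_mul, hθ.pow_eq_one, one_pow]
    have hbb' : b' * b ^ s = 1 := by
      apply (algebraMap F E).injective
      rw [map_mul, map_pow, map_one, hb', hb, inv_pow, ← pow_mul, pow_natCast_val hθ,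
        mul_comm t s]
      exact mul_inv_cancel₀ (pow_ne_zero _ hθ0)
    refine ⟨s, s', t, b, hco, hss', hqt, hb, ?_⟩
    have hfun : (fun x => AdjoinRoot.mk (X ^ n - 1 : F[X])
          ((stdRep hn.ne' x).comp (C b * X ^ s')))
        = fun x => Phi hb1 s' x := funext (fun x => Phi_stdRep hb1 s' x)
    rw [hfun, image_Phi_eq hθ P fPF hfPF hss' hb1 hb'1 hbτ hb' hbb', hdual]
    rw [(AB_iff P s t).2 him]
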